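/- Let F : ℕ → ℤ satisfy F 0 = 0, F 1 = 1, F (n+2) = -2 F (n+1) + 2 F n. Then for all n, as real numbers: F(n+1)^2 - 2 F(n+1) F(n) - 2 F(n)^2 = (2^n / 3) * ((1+√3)(2+√3)^n + (1-√3)(2-√3)^n + (-1)^n). -/
import Mathlib


theorem stmt_11 (F : ℕ → ℤ) (h0 : F 0 = 0) (h1 : F 1 = 1)
    (hrec : ∀ n, F (n+2) = -2 * F (n+1) + 2 * F n) :
    ∀ n : ℕ, ((F (n+1) : ℝ))^2 - 2 * F (n+1) * F n - 2 * (F n : ℝ)^2 =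
      (2^n / 3) * ((1 + Real.sqrt 3) * (2 + Real.sqrt 3)^n
        + (1 - Real.sqrt 3) * (2 - Real.sqrt 3)^n + (-1)^n) := by
  set s : ℝ := Real.sqrt 3 with hs_def
  have hs : s ^ 2 = 3 := Real.sq_sqrt (by norm_num)
  -- closed form
  have hF : ∀ n : ℕ, 2 * s * (F n : ℝ) = (-1 + s) ^ n - (-1 - s) ^ n := by
    intro n
    induction n using Nat.twoStepInduction with
    | zero => simp [h0]
    | one => simp [h1]; ring
    | more n ih1 ih2 =>
      have hr := hrec n
      have : (F (n+2) : ℝ) = -2 * F (n+1) + 2 * F n := by exact_mod_cast congrArg (Int.cast : ℤ → ℝ) hr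
      rw [this]
      have hA : (-1 + s) ^ (n+2) = (2 - 2*(-1+s)) * (-1+s)^n := by
        rw [pow_add]; linear_combination ((-1+s)^n) * hs
      have hB : (-1 - s) ^ (n+2) = (2 - 2*(-1-s)) * (-1-s)^n := by
        rw [pow_add]; linear_combination ((-1-s)^n) * hs
      rw [hA, hB]
      linear_combination (-2) * ih2 + 2 * ih1
  intro n
  set a : ℝ := (-1 + s) ^ n with ha_def
  set b : ℝ := (-1 - s) ^ n with hb_def
  have h2 : 2 * s * (F n : ℝ) = a - b := hF n
  have h1' : 2 * s * (F (n+1) : ℝ) = (-1 + s) * a + (1 + s) * b := by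
    have := hF (n+1)
    rw [pow_succ, pow_succ] at this
    linear_combination this
  have hE4 : a ^ 2 = 2 ^ n * (2 - s) ^ n := by
    rw [ha_def, ← pow_mul, mul_comm n 2, pow_mul, ← mul_pow]
    congr 1
    linear_combination hs
  have hE5 : b ^ 2 = 2 ^ n * (2 + s) ^ n := by
    rw [hb_def, ← pow_mul, mul_comm n 2, pow_mul, ← mul_pow]
    congr 1
    linear_combination hs
  have hE6 : a * b = 2 ^ n * (-1 : ℝ) ^ n := by
    rw [ha_def, hb_def, ← mul_pow, ← mul_pow]
    congr 1
    linear_combination -hs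
  set X : ℝ := (-1 + s) * a + (1 + s) * b
  set Y : ℝ := a - b
  have H1 : 12 * (F (n+1) : ℝ) ^ 2 = X ^ 2 := by
    linear_combination (2 * s * (F (n+1) : ℝ) + X) * h1' - 4 * (F (n+1) : ℝ)^2 * hs
  have H2 : 12 * (F (n+1) : ℝ) * (F n : ℝ) = X * Y := by
    linear_combination (2 * s * (F n : ℝ)) * h1' + X * h2 - 4 * (F (n+1) : ℝ) * (F n : ℝ) * hs
  have H3 : 12 * (F n : ℝ) ^ 2 = Y ^ 2 := by
    linear_combination (2 * s * (F n : ℝ) + Y) * h2 - 4 * (F n : ℝ)^2 * hs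
  linear_combination (1/12) * H1 - (1/6) * H2 - (1/6) * H3
    + ((a^2 + b^2 + 2*a*b)/12) * hs + ((1 - s)/3) * hE4 + ((1 + s)/3) * hE5 + (1/3) * hE6
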